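/- Let d ≥ 1, let (A_n)_{n≥1} be a sequence of real d×d matrices converging entrywise to a matrix A, and assume each A_n and A are positive definite, i.e. xᵀA_n x > 0 and xᵀA x > 0 for all nonzero x ∈ ℝ^d. Let S be a nonempty affine subspace of ℝ^d. Then for each n the function x ↦ xᵀA_n x attains a unique minimizer y_n over S, the function x ↦ xᵀA x attains a unique minimizer y over S, and y_n → y as n → ∞. -/
import Mathlib


open Matrix Filter

set_option maxHeartbeats 1000000

section aux

variable {d : ℕ}

private lemma qf_cont (M : Matrix (Fin d) (Fin d) ℝ) :
    Continuous fun x : Fin d → ℝ => x ⬝ᵥ (M *ᵥ x) := by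
  have h : (fun x : Fin d → ℝ => x ⬝ᵥ (M *ᵥ x))
      = fun x => ∑ i, x i * ∑ j, M i j * x j := by
    funext x; simp [dotProduct, Matrix.mulVec]
  rw [h]
  exact continuous_finset_sum _ fun i _ =>
    (continuous_apply i).mul
      (continuous_finset_sum _ fun j _ => continuous_const.mul (continuous_apply j))

private lemma qf_smul (M : Matrix (Fin d) (Fin d) ℝ) (a : ℝ) (x : Fin d → ℝ) :
    (a • x) ⬝ᵥ (M *ᵥ (a • x)) = a ^ 2 * (x ⬝ᵥ (M *ᵥ x)) := by
  rw [Matrix.mulVec_smul, smul_dotProduct, dotProduct_smul]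
  simp [smul_eq_mul]; ring

private lemma qf_par (M : Matrix (Fin d) (Fin d) ℝ) (u v : Fin d → ℝ) :
    (u + v) ⬝ᵥ (M *ᵥ (u + v)) + (u - v) ⬝ᵥ (M *ᵥ (u - v))
      = 2 * (u ⬝ᵥ (M *ᵥ u)) + 2 * (v ⬝ᵥ (M *ᵥ v)) := by
  simp only [Matrix.mulVec_add, Matrix.mulVec_sub, dotProduct_add, dotProduct_sub,
    add_dotProduct, sub_dotProduct]
  ring

private lemma qf_sum (M : Matrix (Fin d) (Fin d) ℝ) (x : Fin d → ℝ) :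
    x ⬝ᵥ (M *ᵥ x) = ∑ i, ∑ j, M i j * (x i * x j) := by
  simp only [dotProduct, Matrix.mulVec, Finset.mul_sum]
  exact Finset.sum_congr rfl fun i _ => Finset.sum_congr rfl fun j _ => by ring

private lemma qf_diff_bound (M N : Matrix (Fin d) (Fin d) ℝ) (x : Fin d → ℝ) :
    |x ⬝ᵥ (M *ᵥ x) - x ⬝ᵥ (N *ᵥ x)| ≤ (∑ i, ∑ j, |M i j - N i j|) * ‖x‖ ^ 2 := by
  rw [qf_sum, qf_sum, ← Finset.sum_sub_distrib]
  refine (Finset.abs_sum_le_sum_abs _ _).trans ?_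
  rw [Finset.sum_mul]
  refine Finset.sum_le_sum fun i _ => ?_
  rw [← Finset.sum_sub_distrib]
  refine (Finset.abs_sum_le_sum_abs _ _).trans ?_
  rw [Finset.sum_mul]
  refine Finset.sum_le_sum fun j _ => ?_
  rw [← sub_mul, abs_mul, abs_mul]
  have hi : |x i| ≤ ‖x‖ := by
    simpa using norm_le_pi_norm x i
  have hj : |x j| ≤ ‖x‖ := by
    simpa using norm_le_pi_norm x j
  have h0 : (0:ℝ) ≤ |M i j - N i j| := abs_nonneg _
  refine mul_le_mul_of_nonneg_left ?_ h0
  calc |x i| * |x j| ≤ ‖x‖ * ‖x‖ := mul_le_mul hi hj (abs_nonneg _) (norm_nonneg _)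
    _ = ‖x‖ ^ 2 := by ring

private lemma eps_nonneg (M N : Matrix (Fin d) (Fin d) ℝ) :
    (0:ℝ) ≤ ∑ i, ∑ j, |M i j - N i j| :=
  Finset.sum_nonneg fun _ _ => Finset.sum_nonneg fun _ _ => abs_nonneg _

private lemma qf_coercive (hd : 1 ≤ d) (M : Matrix (Fin d) (Fin d) ℝ)
    (hpos : ∀ x : Fin d → ℝ, x ≠ 0 → 0 < x ⬝ᵥ (M *ᵥ x)) :
    ∃ c > 0, ∀ x : Fin d → ℝ, c * ‖x‖ ^ 2 ≤ x ⬝ᵥ (M *ᵥ x) := by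
  haveI : Nonempty (Fin d) := ⟨⟨0, hd⟩⟩
  have hne : (Metric.sphere (0 : Fin d → ℝ) 1).Nonempty := by
    refine ⟨fun _ => 1, ?_⟩
    simp [Metric.mem_sphere, dist_eq_norm, pi_norm_const]
  obtain ⟨x0, hx0, hmin⟩ :=
    (isCompact_sphere (0 : Fin d → ℝ) 1).exists_isMinOn hne (qf_cont M).continuousOn
  have hx0n : x0 ≠ 0 := by
    intro h
    rw [h] at hx0
    simp [Metric.mem_sphere] at hx0
  refine ⟨x0 ⬝ᵥ (M *ᵥ x0), hpos x0 hx0n, fun x => ?_⟩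
  rcases eq_or_ne x 0 with rfl | hx
  · simp
  · have hnx : ‖x‖ ≠ 0 := norm_ne_zero_iff.2 hx
    have h1 : (‖x‖⁻¹ • x) ∈ Metric.sphere (0 : Fin d → ℝ) 1 := by
      simp [Metric.mem_sphere, dist_eq_norm, norm_smul, abs_of_nonneg (norm_nonneg x),
        inv_mul_cancel₀ hnx]
    have h2 := isMinOn_iff.mp hmin _ h1
    rw [qf_smul] at h2
    have hx2 : (0:ℝ) < ‖x‖ ^ 2 := by positivity
    have hinv : ‖x‖⁻¹ ^ 2 * ‖x‖ ^ 2 = 1 := by field_simp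
    have h3 := mul_le_mul_of_nonneg_right h2 hx2.le
    calc (x0 ⬝ᵥ (M *ᵥ x0)) * ‖x‖ ^ 2 ≤ (‖x‖⁻¹ ^ 2 * (x ⬝ᵥ (M *ᵥ x))) * ‖x‖ ^ 2 := h3
      _ = (x ⬝ᵥ (M *ᵥ x)) * (‖x‖⁻¹ ^ 2 * ‖x‖ ^ 2) := by ring
      _ = x ⬝ᵥ (M *ᵥ x) := by rw [hinv, mul_one]

private lemma qf_exists_min (hd : 1 ≤ d) (M : Matrix (Fin d) (Fin d) ℝ)
    (hpos : ∀ x : Fin d → ℝ, x ≠ 0 → 0 < x ⬝ᵥ (M *ᵥ x))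
    (s : Set (Fin d → ℝ)) (hclosed : IsClosed s) (hne : s.Nonempty) :
    ∃ y ∈ s, ∀ x ∈ s, y ⬝ᵥ (M *ᵥ y) ≤ x ⬝ᵥ (M *ᵥ x) := by
  obtain ⟨c, hc, hcoer⟩ := qf_coercive hd M hpos
  obtain ⟨p, hp⟩ := hne
  have hqp : 0 ≤ p ⬝ᵥ (M *ᵥ p) := le_trans (by positivity) (hcoer p)
  set R : ℝ := ‖p‖ + Real.sqrt ((p ⬝ᵥ (M *ᵥ p)) / c) + 1 with hR
  have hsq : Real.sqrt ((p ⬝ᵥ (M *ᵥ p)) / c) ^ 2 = (p ⬝ᵥ (M *ᵥ p)) / c :=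
    Real.sq_sqrt (div_nonneg hqp hc.le)
  have hsnn := Real.sqrt_nonneg ((p ⬝ᵥ (M *ᵥ p)) / c)
  have hRpos : 0 < R := by positivity
  have hRgt : Real.sqrt ((p ⬝ᵥ (M *ᵥ p)) / c) < R := by
    rw [hR]; nlinarith [norm_nonneg p]
  have hcR : p ⬝ᵥ (M *ᵥ p) < c * R ^ 2 := by
    have h2 : (p ⬝ᵥ (M *ᵥ p)) / c < R ^ 2 := by
      rw [← hsq]; exact pow_lt_pow_left₀ hRgt hsnn (by norm_num)
    rw [div_lt_iff₀ hc] at h2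
    linarith
  have hK : IsCompact (s ∩ Metric.closedBall 0 R) :=
    (isCompact_closedBall (0 : Fin d → ℝ) R).inter_left hclosed
  have hpK : p ∈ s ∩ Metric.closedBall 0 R := by
    refine ⟨hp, ?_⟩
    simp only [Metric.mem_closedBall, dist_zero_right]
    rw [hR]; linarith
  obtain ⟨y, hyK, hymin⟩ := hK.exists_isMinOn ⟨p, hpK⟩ (qf_cont M).continuousOn
  refine ⟨y, hyK.1, fun x hx => ?_⟩
  by_cases hxR : ‖x‖ ≤ R
  · exact isMinOn_iff.mp hymin x ⟨hx, by simpa [Metric.mem_closedBall, dist_zero_right]⟩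
  · push_neg at hxR
    have h1 : y ⬝ᵥ (M *ᵥ y) ≤ p ⬝ᵥ (M *ᵥ p) := isMinOn_iff.mp hymin p hpK
    have h2 : R ^ 2 < ‖x‖ ^ 2 := pow_lt_pow_left₀ hxR hRpos.le (by norm_num)
    have h3 : c * R ^ 2 ≤ c * ‖x‖ ^ 2 := by nlinarith
    have h4 := hcoer x
    linarith

private lemma qf_unique (M : Matrix (Fin d) (Fin d) ℝ)
    (hpos : ∀ x : Fin d → ℝ, x ≠ 0 → 0 < x ⬝ᵥ (M *ᵥ x))
    (S : AffineSubspace ℝ (Fin d → ℝ)) {y z : Fin d → ℝ}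
    (hy : y ∈ S) (hz : z ∈ S)
    (hminy : ∀ x ∈ S, y ⬝ᵥ (M *ᵥ y) ≤ x ⬝ᵥ (M *ᵥ x))
    (hminz : ∀ x ∈ S, z ⬝ᵥ (M *ᵥ z) ≤ x ⬝ᵥ (M *ᵥ x)) : z = y := by
  by_contra hne
  set m : Fin d → ℝ := (1/2 : ℝ) • z + (1/2 : ℝ) • y with hm
  set v : Fin d → ℝ := (1/2 : ℝ) • z - (1/2 : ℝ) • y with hv
  have hmS : m ∈ S := by
    have := S.convex (show z ∈ (S : Set (Fin d → ℝ)) from hz)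
      (show y ∈ (S : Set (Fin d → ℝ)) from hy)
      (by norm_num : (0:ℝ) ≤ 1/2) (by norm_num : (0:ℝ) ≤ 1/2) (by norm_num)
    exact this
  have h1 : m + v = z := by rw [hm, hv]; module
  have h2 : m - v = y := by rw [hm, hv]; module
  have hpar := qf_par M m v
  rw [h1, h2] at hpar
  have e1 : z ⬝ᵥ (M *ᵥ z) = y ⬝ᵥ (M *ᵥ y) :=
    le_antisymm (hminz y hy) (hminy z hz)
  have hmge : y ⬝ᵥ (M *ᵥ y) ≤ m ⬝ᵥ (M *ᵥ m) := hminy m hmS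
  have hvne : v ≠ 0 := by
    intro h
    apply hne
    have : z - y = (2:ℝ) • v := by rw [hv]; module
    rw [h, smul_zero] at this
    exact sub_eq_zero.mp this
  have := hpos v hvne
  linarith

end aux

/-- if positive definite matrices Aₙ converge entrywise to a positive
definite matrix A, and S is a nonempty affine subspace of ℝ^d, then the quadratic forms
x ↦ xᵀAₙx and x ↦ xᵀAx have unique minimizers yₙ and y over S, and yₙ → y. -/
theorem stmt11 (d : ℕ) (hd : 1 ≤ d)
    (A : ℕ → Matrix (Fin d) (Fin d) ℝ) (Alim : Matrix (Fin d) (Fin d) ℝ)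
    (hconv : ∀ i j, Tendsto (fun n => A n i j) atTop (nhds (Alim i j)))
    (hposA : ∀ n, ∀ x : Fin d → ℝ, x ≠ 0 → 0 < x ⬝ᵥ (A n *ᵥ x))
    (hposLim : ∀ x : Fin d → ℝ, x ≠ 0 → 0 < x ⬝ᵥ (Alim *ᵥ x))
    (S : AffineSubspace ℝ (Fin d → ℝ)) (hS : (S : Set (Fin d → ℝ)).Nonempty) :
    ∃ (Y : ℕ → Fin d → ℝ) (y : Fin d → ℝ),
      (∀ n, Y n ∈ S ∧ (∀ x ∈ S, Y n ⬝ᵥ (A n *ᵥ Y n) ≤ x ⬝ᵥ (A n *ᵥ x)) ∧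
        (∀ z ∈ S, (∀ x ∈ S, z ⬝ᵥ (A n *ᵥ z) ≤ x ⬝ᵥ (A n *ᵥ x)) → z = Y n)) ∧
      (y ∈ S ∧ (∀ x ∈ S, y ⬝ᵥ (Alim *ᵥ y) ≤ x ⬝ᵥ (Alim *ᵥ x)) ∧
        (∀ z ∈ S, (∀ x ∈ S, z ⬝ᵥ (Alim *ᵥ z) ≤ x ⬝ᵥ (Alim *ᵥ x)) → z = y)) ∧
      Tendsto Y atTop (nhds y) := by
  have hSclosed : IsClosed (S : Set (Fin d → ℝ)) := S.closed_of_finiteDimensional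
  choose Y hY1 hY2 using fun n => qf_exists_min hd (A n) (hposA n) _ hSclosed hS
  obtain ⟨y, hy1, hy2⟩ := qf_exists_min hd Alim hposLim _ hSclosed hS
  refine ⟨Y, y,
    fun n => ⟨hY1 n, hY2 n, fun z hz hmz => qf_unique (A n) (hposA n) S (hY1 n) hz (hY2 n) hmz⟩,
    ⟨hy1, hy2, fun z hz hmz => qf_unique Alim hposLim S hy1 hz hy2 hmz⟩, ?_⟩
  -- Convergence
  set ε : ℕ → ℝ := fun n => ∑ i, ∑ j, |A n i j - Alim i j| with hεdef
  have hε0 : Tendsto ε atTop (nhds 0) := by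
    have h1 : ∀ i j : Fin d, Tendsto (fun n => |A n i j - Alim i j|) atTop (nhds 0) := by
      intro i j
      have h := (hconv i j).sub (tendsto_const_nhds (x := Alim i j))
      rw [sub_self] at h
      simpa using h.abs
    have h := tendsto_finset_sum (Finset.univ : Finset (Fin d)) fun i _ =>
      tendsto_finset_sum (Finset.univ : Finset (Fin d)) fun j _ => h1 i j
    simpa using h
  have hεnn : ∀ n, 0 ≤ ε n := fun n => eps_nonneg (A n) Alim
  have hbound : ∀ n (x : Fin d → ℝ),
      |x ⬝ᵥ (A n *ᵥ x) - x ⬝ᵥ (Alim *ᵥ x)| ≤ ε n * ‖x‖ ^ 2 :=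
    fun n x => qf_diff_bound (A n) Alim x
  obtain ⟨c, hc, hcoer⟩ := qf_coercive hd Alim hposLim
  obtain ⟨p, hp⟩ := hS
  obtain ⟨N₀, hN₀⟩ := eventually_atTop.mp (hε0.eventually_le_const (by linarith : (0:ℝ) < c/2))
  set D : ℝ := p ⬝ᵥ (Alim *ᵥ p) + (c/2) * ‖p‖ ^ 2 with hDdef
  have hqp : 0 ≤ p ⬝ᵥ (Alim *ᵥ p) := le_trans (by positivity) (hcoer p)
  have hD : 0 ≤ D := by rw [hDdef]; positivity
  set R : ℝ := Real.sqrt (2 * D / c) with hRdef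
  have hYb : ∀ n, N₀ ≤ n → ‖Y n‖ ≤ R := by
    intro n hn
    have hεn : ε n ≤ c / 2 := hN₀ n hn
    have h1 : Y n ⬝ᵥ (A n *ᵥ Y n) ≤ p ⬝ᵥ (A n *ᵥ p) := hY2 n p hp
    have h2 := abs_le.mp (hbound n p)
    have h3 := abs_le.mp (hbound n (Y n))
    have h4 := hcoer (Y n)
    have h5 : ε n * ‖Y n‖ ^ 2 ≤ (c/2) * ‖Y n‖ ^ 2 :=
      mul_le_mul_of_nonneg_right hεn (by positivity)
    have h6 : ε n * ‖p‖ ^ 2 ≤ (c/2) * ‖p‖ ^ 2 :=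
      mul_le_mul_of_nonneg_right hεn (by positivity)
    have h7 : (c/2) * ‖Y n‖ ^ 2 ≤ D := by rw [hDdef]; linarith
    refine Real.le_sqrt_of_sq_le ?_
    rw [le_div_iff₀ hc]
    have h8 := mul_le_mul_of_nonneg_left h7 (by norm_num : (0:ℝ) ≤ 2)
    calc ‖Y n‖ ^ 2 * c = 2 * (c / 2 * ‖Y n‖ ^ 2) := by ring
      _ ≤ 2 * D := h8
  apply tendsto_of_subseq_tendsto
  intro ns hns
  obtain ⟨K, hK⟩ := eventually_atTop.mp (hns.eventually_ge_atTop N₀)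
  set u : ℕ → Fin d → ℝ := fun k => Y (ns (k + K)) with hudef
  have hu : ∀ k, u k ∈ Metric.closedBall (0 : Fin d → ℝ) R := by
    intro k
    simp only [Metric.mem_closedBall, dist_zero_right]
    exact hYb _ (hK (k + K) (Nat.le_add_left K k))
  obtain ⟨z, hzball, φ, hφmono, hφtend⟩ :=
    (isCompact_closedBall (0 : Fin d → ℝ) R).tendsto_subseq hu
  set m : ℕ → ℕ := fun k => ns (φ k + K) with hmdef
  have hmtend : Tendsto m atTop atTop :=
    hns.comp ((tendsto_add_atTop_nat K).comp hφmono.tendsto_atTop)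
  have hzS : z ∈ S := hSclosed.mem_of_tendsto hφtend
    (Eventually.of_forall fun k => hY1 (ns (φ k + K)))
  have huR : ∀ k, ‖u (φ k)‖ ≤ R := fun k => by
    have := hu (φ k); simpa [Metric.mem_closedBall, dist_zero_right] using this
  -- q Alim (u (φ k)) → q Alim z
  have hq1 : Tendsto (fun k => (u (φ k)) ⬝ᵥ (Alim *ᵥ (u (φ k)))) atTop
      (nhds (z ⬝ᵥ (Alim *ᵥ z))) :=
    ((qf_cont Alim).tendsto z).comp hφtend
  -- difference → 0
  have hεm : Tendsto (fun k => ε (m k)) atTop (nhds 0) := hε0.comp hmtend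
  have hdiff : Tendsto (fun k =>
      (u (φ k)) ⬝ᵥ (A (m k) *ᵥ (u (φ k))) - (u (φ k)) ⬝ᵥ (Alim *ᵥ (u (φ k)))) atTop (nhds 0) := by
    have hb : ∀ k, ‖(u (φ k)) ⬝ᵥ (A (m k) *ᵥ (u (φ k))) - (u (φ k)) ⬝ᵥ (Alim *ᵥ (u (φ k)))‖
        ≤ ε (m k) * R ^ 2 := by
      intro k
      rw [Real.norm_eq_abs]
      refine (hbound (m k) (u (φ k))).trans ?_
      have h8 : ‖u (φ k)‖ ^ 2 ≤ R ^ 2 := by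
        have := huR k
        nlinarith [norm_nonneg (u (φ k))]
      exact mul_le_mul_of_nonneg_left h8 (hεnn (m k))
    have hg : Tendsto (fun k => ε (m k) * R ^ 2) atTop (nhds 0) := by
      have := hεm.mul_const (R ^ 2)
      simpa using this
    exact squeeze_zero_norm hb hg
  have hq2 : Tendsto (fun k => (u (φ k)) ⬝ᵥ (A (m k) *ᵥ (u (φ k)))) atTop
      (nhds (z ⬝ᵥ (Alim *ᵥ z))) := by
    have := hdiff.add hq1
    simpa using this
  -- z is a minimizer
  have hzmin : ∀ x ∈ S, z ⬝ᵥ (Alim *ᵥ z) ≤ x ⬝ᵥ (Alim *ᵥ x) := by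
    intro x hx
    have hq3 : Tendsto (fun k => x ⬝ᵥ (A (m k) *ᵥ x)) atTop (nhds (x ⬝ᵥ (Alim *ᵥ x))) := by
      have hd0 : Tendsto (fun k => x ⬝ᵥ (A (m k) *ᵥ x) - x ⬝ᵥ (Alim *ᵥ x)) atTop (nhds 0) := by
        have hb : ∀ k, ‖x ⬝ᵥ (A (m k) *ᵥ x) - x ⬝ᵥ (Alim *ᵥ x)‖ ≤ ε (m k) * ‖x‖ ^ 2 := by
          intro k; rw [Real.norm_eq_abs]; exact hbound (m k) x
        have hg : Tendsto (fun k => ε (m k) * ‖x‖ ^ 2) atTop (nhds 0) := by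
          have := hεm.mul_const (‖x‖ ^ 2)
          simpa using this
        exact squeeze_zero_norm hb hg
      have := hd0.add (tendsto_const_nhds (x := x ⬝ᵥ (Alim *ᵥ x)))
      simpa using this
    refine le_of_tendsto_of_tendsto' hq2 hq3 fun k => ?_
    exact hY2 (m k) x hx
  have hzy : z = y := qf_unique Alim hposLim S hy1 hzS hy2 hzmin
  exact ⟨fun k => φ k + K, hzy ▸ hφtend⟩
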